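/- For every constant c > 1 there is a constant C = C(c) > 0 such that the following holds. Let n ≥ 2, δ = n^{−c}, and let f: {−1,1}^n → ℝ satisfy ‖f‖_∞ ≤ 1 and f((−1)^n) = f(1^n) = 0. Then | E_{x∼D_Shap}[ f(x) ] − ∫_δ^{1−δ} ( (1/p + 1/(1−p)) / Λ(n) )·E_{x∼u_p^n}[ f(x) ] dp | ≤ C·n·δ / Λ(n). -/

import Mathlib

open Finset MeasureTheory

noncomputable section

/-- The sign function: `+1` on nonnegative reals, `-1` otherwise. -/
def sgn (t : ℝ) : ℝ := if 0 ≤ t then 1 else -1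

/-- View a Boolean point of the hypercube as a point of `{-1,1}^n ⊆ ℝ^n`. -/
def toSigns {n : ℕ} (x : Fin n → Bool) : Fin n → ℝ := fun i => if x i then 1 else -1

/-- Expectation under the uniform distribution on `{-1,1}^n`. -/
def unifExp {n : ℕ} (F : (Fin n → ℝ) → ℝ) : ℝ :=
  ((2 : ℝ) ^ n)⁻¹ * ∑ x : Fin n → Bool, F (toSigns x)

/-- Degree-1 Chow parameters (degree-1 Fourier coefficients). -/
def chow {n : ℕ} (f : (Fin n → ℝ) → ℝ) (i : Fin n) : ℝ := unifExp (fun x => f x * x i)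

/-- Extended Chow parameters indexed by `{0,1,…,n}`; index `0` is the constant coefficient
and index `i+1` corresponds to coordinate `i`. -/
def chowE {n : ℕ} (f : (Fin n → ℝ) → ℝ) (j : Fin (n + 1)) : ℝ :=
  unifExp (fun x => f x * Fin.cases (motive := fun _ => ℝ) 1 x j)

/-- Partial Chow distance with respect to a set `S ⊆ {0,1,…,n}` of indices. -/
def dPC {n : ℕ} (S : Finset (Fin (n + 1))) (f g : (Fin n → ℝ) → ℝ) : ℝ :=
  Real.sqrt (∑ j ∈ S, (chowE f j - chowE g j) ^ 2)

/-- `g` is a linear threshold function. -/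
def IsLTF {n : ℕ} (g : (Fin n → ℝ) → ℝ) : Prop :=
  ∃ (w : Fin n → ℝ) (θ : ℝ), ∀ x, g x = sgn (∑ i, w i * x i - θ)

/-- `g` is a junta over the coordinates in `H`. -/
def JuntaOn {n : ℕ} (H : Finset (Fin n)) (g : (Fin n → ℝ) → ℝ) : Prop :=
  ∀ x y : Fin n → ℝ, (∀ i ∈ H, x i = y i) → g x = g y

/-- The restriction of `w` to the coordinates in `T` is a nonzero `τ`-regular vector,
i.e. `‖w_T‖_∞ / ‖w_T‖₂ ≤ τ`. -/
def RegularOn {n : ℕ} (T : Finset (Fin n)) (w : Fin n → ℝ) (τ : ℝ) : Prop :=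
  (∃ i ∈ T, w i ≠ 0) ∧ ∀ i ∈ T, |w i| ≤ τ * Real.sqrt (∑ j ∈ T, w j ^ 2)

/-- The point `x(π,i)`: `+1` in coordinates `j` with `π j < π i`, `-1` elsewhere. -/
def pivX {n : ℕ} (π : Equiv.Perm (Fin n)) (i : Fin n) : Fin n → ℝ :=
  fun j => if π j < π i then 1 else -1

/-- The point `x⁺(π,i)`: `x(π,i)` with coordinate `i` flipped to `+1`. -/
def pivXp {n : ℕ} (π : Equiv.Perm (Fin n)) (i : Fin n) : Fin n → ℝ :=
  Function.update (pivX π i) i 1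

/-- The `i`-th (generalized) Shapley index of `f`. -/
def shapley {n : ℕ} (f : (Fin n → ℝ) → ℝ) (i : Fin n) : ℝ :=
  ((n.factorial : ℝ))⁻¹ * ∑ π : Equiv.Perm (Fin n), (f (pivXp π i) - f (pivX π i))

/-- Shapley distance between `f` and `g`. -/
def dShapley {n : ℕ} (f g : (Fin n → ℝ) → ℝ) : ℝ :=
  Real.sqrt (∑ i : Fin n, (shapley f i - shapley g i) ^ 2)

/-- The probability weight of `x` under the `p`-biased product distribution `u_p^n`. -/
def pwt (p : ℝ) {n : ℕ} (x : Fin n → Bool) : ℝ := ∏ i, (if x i then p else 1 - p)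

/-- Expectation under the `p`-biased product distribution `u_p^n` on `{-1,1}^n`. -/
def pExp (p : ℝ) {n : ℕ} (F : (Fin n → ℝ) → ℝ) : ℝ :=
  ∑ x : Fin n → Bool, pwt p x * F (toSigns x)

/-- Probability of an event under the `p`-biased product distribution `u_p^n`. -/
def pProb (p : ℝ) {n : ℕ} (E : Set (Fin n → ℝ)) : ℝ :=
  ∑ x : Fin n → Bool, pwt p x * Set.indicator E (fun _ => (1 : ℝ)) (toSigns x)

/-- `μ_p = 2p - 1`. -/
def muP (p : ℝ) : ℝ := 2 * p - 1

/-- `σ_p = 2√(p(1-p))`. -/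
def sigmaP (p : ℝ) : ℝ := 2 * Real.sqrt (p * (1 - p))

/-- `ψ_p(x) = (x - μ_p)/σ_p`. -/
def psiP (p x : ℝ) : ℝ := (x - muP p) / sigmaP p

/-- The `p`-biased degree-1 Fourier coefficient `f̂(i,p)`. -/
def pChow (p : ℝ) {n : ℕ} (f : (Fin n → ℝ) → ℝ) (i : Fin n) : ℝ :=
  pExp p (fun x => f x * psiP p (x i))

/-- `ψ_p^{[w_T]}(t) = (t - μ_p·Σ_{i∈T} w_i)/(σ_p·‖w_T‖₂)`. -/
def psiW (p : ℝ) {n : ℕ} (T : Finset (Fin n)) (w : Fin n → ℝ) (t : ℝ) : ℝ :=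
  (t - muP p * ∑ i ∈ T, w i) / (sigmaP p * Real.sqrt (∑ i ∈ T, w i ^ 2))

/-- The standard Gaussian density `φ`. -/
def gaussPhi (x : ℝ) : ℝ := (Real.sqrt (2 * Real.pi))⁻¹ * Real.exp (-(x ^ 2) / 2)

/-- The standard Gaussian cumulative distribution function `Φ`. -/
def gaussCdf (t : ℝ) : ℝ := ∫ x in Set.Iic t, gaussPhi x

/-- `m(θ) = 1 - 2Φ(θ) = E_{x∼N(0,1)}[sign(x-θ)]`. -/
def mFun (θ : ℝ) : ℝ := 1 - 2 * gaussCdf θ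

open Classical in
/-- `W(ν) = (2φ(m⁻¹(ν)))²`, extended by `0` off the range of `m`. -/
def WFun (ν : ℝ) : ℝ :=
  if h : ∃ θ : ℝ, mFun θ = ν then (2 * gaussPhi (Classical.choose h)) ^ 2 else 0

/-- `Λ(n) = Σ_{0<k<n} (1/k + 1/(n-k))`. -/
def LambdaN (n : ℕ) : ℝ := ∑ k ∈ Finset.Ioo 0 n, ((k : ℝ)⁻¹ + ((n : ℝ) - (k : ℝ))⁻¹)

/-- The probability weight of a point of the cube under the Shapley distribution `D_Shap`. -/
def shapWt {n : ℕ} (x : Fin n → Bool) : ℝ :=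
  if (Finset.univ.filter (fun i => x i = true)).card = 0 ∨
     (Finset.univ.filter (fun i => x i = true)).card = n then 0
  else (((Finset.univ.filter (fun i => x i = true)).card : ℝ)⁻¹ +
        ((n : ℝ) - ((Finset.univ.filter (fun i => x i = true)).card : ℝ))⁻¹) /
       (LambdaN n * ((n.choose (Finset.univ.filter (fun i => x i = true)).card : ℕ) : ℝ))

/-- Expectation under the Shapley distribution `D_Shap`. -/
def shapExp {n : ℕ} (F : (Fin n → ℝ) → ℝ) : ℝ :=
  ∑ x : Fin n → Bool, shapWt x * F (toSigns x)

/-- Probability of an event under the Shapley distribution `D_Shap`. -/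
def shapProb {n : ℕ} (E : Set (Fin n → ℝ)) : ℝ :=
  ∑ x : Fin n → Bool, shapWt x * Set.indicator E (fun _ => (1 : ℝ)) (toSigns x)

end


noncomputable section AuxShap


lemma betaNat (a b : ℕ) :
    ∫ x in (0:ℝ)..1, x ^ a * (1 - x) ^ b
      = (a.factorial * b.factorial : ℝ) / (a + b + 1).factorial := by
  induction b generalizing a with
  | zero =>
      simp only [pow_zero, mul_one, integral_pow]
      rw [Nat.factorial_succ]
      push_cast
      rw [one_pow]
      norm_num
      rw [eq_div_iff (by positivity)]
      field_simp
  | succ b ih =>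
      have key : (a + 1 : ℝ) * ∫ x in (0:ℝ)..1, x ^ a * (1 - x) ^ (b + 1)
          = (b + 1 : ℝ) * ∫ x in (0:ℝ)..1, x ^ (a + 1) * (1 - x) ^ b := by
        have hF : ∀ x : ℝ, HasDerivAt (fun y : ℝ => y ^ (a + 1) * (1 - y) ^ (b + 1))
            ((a + 1 : ℝ) * x ^ a * (1 - x) ^ (b + 1)
              - (b + 1 : ℝ) * (x ^ (a + 1) * (1 - x) ^ b)) x := by
          intro x
          have h1 : HasDerivAt (fun y : ℝ => y ^ (a + 1)) ((a + 1 : ℝ) * x ^ a) x := by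
            simpa using hasDerivAt_pow (a + 1) x
          have h2 : HasDerivAt (fun y : ℝ => (1 - y) ^ (b + 1))
              (-((b + 1 : ℝ) * (1 - x) ^ b)) x := by
            have h3 : HasDerivAt (fun y : ℝ => 1 - y) (-1) x := by
              simpa using (hasDerivAt_id x).const_sub 1
            have := h3.fun_pow (b + 1)
            simpa [mul_comm, mul_assoc] using this
          have := h1.fun_mul h2
          refine this.congr_deriv ?_
          ring
        have hcont1 : Continuous fun x : ℝ => x ^ a * (1 - x) ^ (b + 1) := by fun_prop
        have hcont2 : Continuous fun x : ℝ => x ^ (a + 1) * (1 - x) ^ b := by fun_prop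
        have hFTC := intervalIntegral.integral_eq_sub_of_hasDerivAt
          (f := fun y : ℝ => y ^ (a + 1) * (1 - y) ^ (b + 1))
          (a := (0:ℝ)) (b := 1)
          (fun x _ => hF x)
          (by
            apply Continuous.intervalIntegrable
            fun_prop)
        have hsplit : ∫ x in (0:ℝ)..1,
            ((a + 1 : ℝ) * x ^ a * (1 - x) ^ (b + 1)
              - (b + 1 : ℝ) * (x ^ (a + 1) * (1 - x) ^ b))
            = (a + 1 : ℝ) * (∫ x in (0:ℝ)..1, x ^ a * (1 - x) ^ (b + 1))
              - (b + 1 : ℝ) * ∫ x in (0:ℝ)..1, x ^ (a + 1) * (1 - x) ^ b := by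
          rw [intervalIntegral.integral_sub (by apply Continuous.intervalIntegrable; fun_prop)
            (by apply Continuous.intervalIntegrable; fun_prop)]
          rw [← intervalIntegral.integral_const_mul, ← intervalIntegral.integral_const_mul]
          congr 1
          apply intervalIntegral.integral_congr
          intro x _; ring
        rw [hsplit] at hFTC
        simp at hFTC
        linarith
      have ha1 : (a + 1 : ℝ) ≠ 0 := by positivity
      have := ih (a + 1)
      have goal : ∫ x in (0:ℝ)..1, x ^ a * (1 - x) ^ (b + 1)
          = (b + 1 : ℝ) / (a + 1 : ℝ) * ((a+1).factorial * b.factorial / ((a + 1) + b + 1).factorial) := by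
        rw [← this]
        field_simp at key ⊢
        linarith [key]
      rw [goal]
      have h1 : ((a+1) + b + 1) = (a + (b+1) + 1) := by omega
      rw [h1]
      rw [Nat.factorial_succ (a), Nat.factorial_succ b]
      push_cast
      field_simp

section AuxShap2

variable {n : ℕ}

def cnt {n : ℕ} (x : Fin n → Bool) : ℕ := (Finset.univ.filter (fun i => x i = true)).card

lemma cnt_le (x : Fin n → Bool) : cnt x ≤ n := by
  classical
  simpa [cnt] using (Finset.card_filter_le (Finset.univ : Finset (Fin n)) (fun i => x i = true))

lemma prod_ite_cnt (x : Fin n → Bool) (a b : ℝ) :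
    (∏ i, if x i then a else b) = a ^ cnt x * b ^ (n - cnt x) := by
  classical
  rw [← Finset.prod_filter_mul_prod_filter_not Finset.univ (fun i => x i = true)]
  have h1 : (∏ i ∈ Finset.univ.filter (fun i => x i = true), if x i then a else b)
      = a ^ cnt x := by
    rw [Finset.prod_congr rfl (fun i hi => ?_), Finset.prod_const]
    · rfl
    · simp only [Finset.mem_filter] at hi
      simp [hi.2]
  have hcard : (Finset.univ.filter (fun i => ¬ x i = true)).card = n - cnt x := by
    have := Finset.card_filter_add_card_filter_not (s := (Finset.univ : Finset (Fin n)))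
      (p := fun i => x i = true)
    simp only [Finset.card_univ, Fintype.card_fin] at this
    have h0 : (Finset.univ.filter (fun i => x i = true)).card = cnt x := rfl
    have h1 := cnt_le x
    omega
  have h2 : (∏ i ∈ Finset.univ.filter (fun i => ¬ x i = true), if x i then a else b)
      = b ^ (n - cnt x) := by
    rw [Finset.prod_congr rfl (fun i hi => ?_), Finset.prod_const, hcard]
    simp only [Finset.mem_filter] at hi
    simp [hi.2]
  rw [h1, h2]

lemma pwt_eq (p : ℝ) (x : Fin n → Bool) : pwt p x = p ^ cnt x * (1 - p) ^ (n - cnt x) := by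
  rw [pwt, prod_ite_cnt]

lemma cnt_eq_zero_iff (x : Fin n → Bool) : cnt x = 0 ↔ x = fun _ => false := by
  classical
  constructor
  · intro h
    funext i
    rw [cnt, Finset.card_eq_zero, Finset.filter_eq_empty_iff] at h
    simpa using h (Finset.mem_univ i)
  · intro h
    subst h
    simp [cnt]

lemma cnt_eq_n_iff (x : Fin n → Bool) : cnt x = n ↔ x = fun _ => true := by
  classical
  constructor
  · intro h
    funext i
    have : (Finset.univ.filter (fun i => x i = true)) = Finset.univ := by
      apply Finset.eq_univ_of_card
      rw [Fintype.card_fin]; exact h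
    have := Finset.mem_filter.mp (this ▸ Finset.mem_univ i)
    exact this.2
  · intro h
    subst h
    simp [cnt]

lemma toSigns_false : toSigns (fun _ : Fin n => false) = fun _ => (-1 : ℝ) := by
  funext i; simp [toSigns]

lemma toSigns_true : toSigns (fun _ : Fin n => true) = fun _ => (1 : ℝ) := by
  funext i; simp [toSigns]

lemma sum_prod_bool (g : Fin n → Bool → ℝ) :
    ∑ x : Fin n → Bool, ∏ i, g i (x i) = ∏ i, (g i true + g i false) := by
  classical
  rw [show (∏ i, (g i true + g i false)) = ∏ i, ∑ j ∈ (Finset.univ : Finset Bool), g i j by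
    apply Finset.prod_congr rfl; intro i _; simp [Fintype.sum_bool]]
  rw [Finset.prod_univ_sum]
  rw [Fintype.piFinset_univ]

lemma sum_pow_cnt (d : ℝ) :
    ∑ x : Fin n → Bool, d ^ cnt x = (d + 1) ^ n := by
  classical
  have : ∀ x : Fin n → Bool, d ^ cnt x = ∏ i, (if x i then d else 1) := by
    intro x; rw [prod_ite_cnt]; simp
  rw [Finset.sum_congr rfl (fun x _ => this x)]
  have h := sum_prod_bool (n := n) (fun _ (j : Bool) => if j then d else (1:ℝ))
  simpa using h

lemma sum_pow_cocnt (d : ℝ) :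
    ∑ x : Fin n → Bool, d ^ (n - cnt x) = (1 + d) ^ n := by
  classical
  have : ∀ x : Fin n → Bool, d ^ (n - cnt x) = ∏ i, (if x i then 1 else d) := by
    intro x; rw [prod_ite_cnt]; simp
  rw [Finset.sum_congr rfl (fun x _ => this x)]
  have h := sum_prod_bool (n := n) (fun _ (j : Bool) => if j then (1:ℝ) else d)
  simpa [add_comm] using h

lemma one_add_pow_sub_one_le (d : ℝ) (hd : 0 ≤ d) (m : ℕ) :
    (1 + d) ^ m - 1 ≤ m * d * (1 + d) ^ m := by
  induction m with
  | zero => simp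
  | succ m ih =>
      have h1 : (0:ℝ) ≤ (1 + d) ^ m := by positivity
      have h2 : (1 + d) ^ m ≤ (1 + d) ^ (m + 1) := by
        apply pow_le_pow_right₀ (by linarith) (by omega)
      have : (1 + d) ^ (m + 1) - 1 = ((1 + d) ^ m - 1) * (1 + d) + d := by ring
      rw [this]
      push_cast
      nlinarith [ih, mul_le_mul_of_nonneg_left h2 (mul_nonneg (Nat.cast_nonneg m) hd)]

lemma one_add_pow_le_three {d : ℝ} (hd : 0 ≤ d) {m : ℕ} (hm : (m : ℝ) * d ≤ 1) :
    (1 + d) ^ m ≤ 3 := by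
  have h1 : (1 + d) ^ m ≤ Real.exp d ^ m := by
    apply pow_le_pow_left₀ (by linarith) (by linarith [Real.add_one_le_exp d])
  have h2 : Real.exp d ^ m = Real.exp (m * d) := by
    rw [← Real.exp_nat_mul]
  have h3 : Real.exp ((m : ℝ) * d) ≤ Real.exp 1 := Real.exp_le_exp.mpr hm
  have := Real.exp_one_lt_d9
  calc (1 + d) ^ m ≤ Real.exp ((m:ℝ) * d) := by rw [← h2]; exact h1
    _ ≤ Real.exp 1 := h3
    _ ≤ 3 := by linarith


end AuxShap2


lemma beta_sum_eq (n k : ℕ) (hk1 : 1 ≤ k) (hkn : k < n) :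
    ((k-1).factorial * (n-k).factorial : ℝ) / n.factorial
      + (k.factorial * (n-k-1).factorial : ℝ) / n.factorial
      = ((k:ℝ)⁻¹ + ((n:ℝ)-(k:ℝ))⁻¹) / (n.choose k : ℝ) := by
  have hkn' : k ≤ n := le_of_lt hkn
  have hch : (n.choose k * k.factorial * (n-k).factorial : ℕ) = n.factorial :=
    Nat.choose_mul_factorial_mul_factorial hkn'
  have hkf : k.factorial = k * (k-1).factorial := by
    conv_lhs => rw [show k = (k-1)+1 by omega]
    rw [Nat.factorial_succ]
    congr 1
    omega
  have hmf : (n-k).factorial = (n-k) * (n-k-1).factorial := by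
    conv_lhs => rw [show n-k = (n-k-1)+1 by omega]
    rw [Nat.factorial_succ]
    congr 1
    omega
  have hnf : (n.factorial : ℝ)
      = (n.choose k : ℝ) * ((k:ℝ) * ((k-1).factorial : ℝ))
        * ((((n:ℝ) - (k:ℝ))) * ((n-k-1).factorial : ℝ)) := by
    rw [← hch, hkf, hmf]
    push_cast [Nat.cast_sub hkn']
    ring
  have hC : (0:ℝ) < (n.choose k : ℝ) := by exact_mod_cast Nat.choose_pos hkn'
  have hk0 : (0:ℝ) < (k:ℝ) := by exact_mod_cast hk1
  have hm0 : (0:ℝ) < (n:ℝ) - (k:ℝ) := by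
    have : (k:ℝ) < (n:ℝ) := by exact_mod_cast hkn
    linarith
  have hA : (0:ℝ) < ((k-1).factorial : ℝ) := by exact_mod_cast Nat.factorial_pos _
  have hB : (0:ℝ) < ((n-k-1).factorial : ℝ) := by exact_mod_cast Nat.factorial_pos _
  have hMf : ((n-k).factorial : ℝ) = ((n:ℝ) - (k:ℝ)) * ((n-k-1).factorial : ℝ) := by
    rw [hmf]; push_cast [Nat.cast_sub hkn']; ring
  have hKf : (k.factorial : ℝ) = (k:ℝ) * ((k-1).factorial : ℝ) := by
    rw [hkf]; push_cast; ring
  rw [hMf, hKf, hnf]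
  field_simp

lemma pq_identity (a b : ℕ) (p : ℝ) (hp : p ≠ 0) (hq : (1:ℝ) - p ≠ 0) :
    (1/p + 1/(1-p)) * (p^(a+1) * (1-p)^(b+1)) = p^a*(1-p)^(b+1) + p^(a+1)*(1-p)^b := by
  field_simp
  ring

end AuxShap

noncomputable section

set_option maxHeartbeats 1000000 in
/-- the truncated mixture of `p`-biased product distributions approximates
expectations under the Shapley distribution. -/
theorem shapley_mixture_approximation :
    ∀ c : ℝ, 1 < c →
      ∃ C : ℝ, 0 < C ∧
        ∀ (n : ℕ) (f : (Fin n → ℝ) → ℝ),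
          2 ≤ n →
          (∀ x : Fin n → Bool, |f (toSigns x)| ≤ 1) →
          f (fun _ => -1) = 0 →
          f (fun _ => 1) = 0 →
          |shapExp f -
              ∫ p in ((n : ℝ) ^ (-c))..(1 - (n : ℝ) ^ (-c)),
                ((1 / p + 1 / (1 - p)) / LambdaN n) * pExp p f| ≤
            C * (n : ℝ) * ((n : ℝ) ^ (-c)) / LambdaN n := by
  intro c hc
  refine ⟨12, by norm_num, ?_⟩
  intro n f hn hf hfm hfp
  classical
  set δ : ℝ := (n : ℝ) ^ (-c) with hδdef
  have hn2 : (2:ℝ) ≤ (n:ℝ) := by exact_mod_cast hn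
  have hn0 : (0:ℝ) < (n:ℝ) := by linarith
  have hn1 : (1:ℝ) ≤ (n:ℝ) := by linarith
  have hδpos : 0 < δ := Real.rpow_pos_of_pos hn0 _
  have hδhalf : δ ≤ 1/2 := by
    have h1 : δ ≤ (n:ℝ) ^ (-1 : ℝ) := Real.rpow_le_rpow_of_exponent_le hn1 (by linarith)
    have h2 : (n:ℝ) ^ (-1:ℝ) = ((n:ℝ))⁻¹ := Real.rpow_neg_one _
    have h3 : ((n:ℝ))⁻¹ ≤ 1/2 := by
      rw [inv_le_comm₀ hn0 (by norm_num)]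
      linarith
    linarith [h1, h2 ▸ h1]
  have hnδ : (n:ℝ) * δ ≤ 1 := by
    have he : (n:ℝ) * δ = (n:ℝ) ^ ((1:ℝ) - c) := by
      rw [hδdef, show (n:ℝ) * (n:ℝ) ^ (-c) = (n:ℝ) ^ (1:ℝ) * (n:ℝ) ^ (-c) by rw [Real.rpow_one],
        ← Real.rpow_add hn0]
      ring_nf
    rw [he]
    exact Real.rpow_le_one_of_one_le_of_nonpos hn1 (by linarith)
  have hΛ : 0 < LambdaN n := by
    rw [LambdaN]
    apply Finset.sum_pos
    · intro k hk
      simp only [Finset.mem_Ioo] at hk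
      have hk1 : (1:ℝ) ≤ (k:ℝ) := by exact_mod_cast hk.1
      have hkn : (k:ℝ) < (n:ℝ) := by exact_mod_cast hk.2
      have p1 : 0 < (k:ℝ)⁻¹ := by positivity
      have p2 : 0 < ((n:ℝ) - (k:ℝ))⁻¹ := inv_pos.mpr (by linarith)
      linarith
    · exact ⟨1, by simp only [Finset.mem_Ioo]; omega⟩
  have hδδ : δ ≤ 1 - δ := by linarith
  have hIcc : Set.uIcc δ (1-δ) = Set.Icc δ (1-δ) := Set.uIcc_of_le hδδ
  -- integrability of each summand
  have hInt : ∀ x : Fin n → Bool, IntervalIntegrable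
      (fun p => ((1/p + 1/(1-p)) / LambdaN n) * (pwt p x * f (toSigns x))) volume δ (1-δ) := by
    intro x
    apply ContinuousOn.intervalIntegrable
    have hp0 : ∀ p ∈ Set.uIcc δ (1-δ), p ≠ 0 := by
      intro p hp; rw [hIcc] at hp; exact ne_of_gt (lt_of_lt_of_le hδpos hp.1)
    have hp1 : ∀ p ∈ Set.uIcc δ (1-δ), (1:ℝ) - p ≠ 0 := by
      intro p hp; rw [hIcc] at hp
      have := hp.2
      intro hcon
      have : p = 1 := by linarith
      linarith [hp.2, hδpos, this]
    apply ContinuousOn.mul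
    · apply ContinuousOn.div_const
      apply ContinuousOn.add
      · exact ContinuousOn.div continuousOn_const continuousOn_id hp0
      · exact ContinuousOn.div continuousOn_const (continuousOn_const.sub continuousOn_id) hp1
    · apply Continuous.continuousOn
      apply Continuous.mul _ continuous_const
      unfold pwt
      apply continuous_finset_prod
      intro i _
      by_cases hxi : x i
      · simp only [hxi, if_true]; exact continuous_id
      · simp only [hxi, Bool.false_eq_true, if_false]; exact continuous_const.sub continuous_id
  -- step 1: swap integral and sum
  have hsplit : (∫ p in δ..(1-δ), ((1 / p + 1 / (1 - p)) / LambdaN n) * pExp p f)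
      = ∑ x : Fin n → Bool, ∫ p in δ..(1-δ),
          ((1/p + 1/(1-p)) / LambdaN n) * (pwt p x * f (toSigns x)) := by
    rw [← intervalIntegral.integral_finset_sum (fun x _ => hInt x)]
    apply intervalIntegral.integral_congr
    intro p _
    simp only [pExp, Finset.mul_sum]
  -- step 2: per-x bound
  have key : ∀ x : Fin n → Bool,
      |shapWt x * f (toSigns x) - ∫ p in δ..(1-δ),
          ((1/p + 1/(1-p)) / LambdaN n) * (pwt p x * f (toSigns x))|
        ≤ (2 / LambdaN n) *
          ((if cnt x = 0 then 0 else δ ^ cnt x) + (if cnt x = n then 0 else δ ^ (n - cnt x))) := by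
    intro x
    have hcnt : (Finset.univ.filter (fun i => x i = true)).card = cnt x := rfl
    by_cases h0 : cnt x = 0
    · have hx : x = fun _ => false := (cnt_eq_zero_iff x).mp h0
      have hfx : f (toSigns x) = 0 := by rw [hx, toSigns_false]; exact hfm
      have hw : shapWt x = 0 := by rw [shapWt, if_pos]; rw [hcnt]; left; exact h0
      have hzero : (fun p => ((1/p + 1/(1-p)) / LambdaN n) * (pwt p x * f (toSigns x)))
          = fun _ : ℝ => (0:ℝ) := by funext p; rw [hfx]; ring
      rw [hzero, hw, hfx]
      simp only [mul_zero, zero_mul, intervalIntegral.integral_zero, sub_zero, abs_zero]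
      have : (0:ℝ) ≤ (2 / LambdaN n) *
          ((if cnt x = 0 then 0 else δ ^ cnt x) + (if cnt x = n then 0 else δ ^ (n - cnt x))) := by
        apply mul_nonneg (by positivity)
        apply add_nonneg <;> split <;> positivity
      simpa using this
    · by_cases hnn : cnt x = n
      · have hx : x = fun _ => true := (cnt_eq_n_iff x).mp hnn
        have hfx : f (toSigns x) = 0 := by rw [hx, toSigns_true]; exact hfp
        have hw : shapWt x = 0 := by rw [shapWt, if_pos]; rw [hcnt]; right; exact hnn
        have hzero : (fun p => ((1/p + 1/(1-p)) / LambdaN n) * (pwt p x * f (toSigns x)))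
            = fun _ : ℝ => (0:ℝ) := by funext p; rw [hfx]; ring
        rw [hzero, hw, hfx]
        simp only [mul_zero, zero_mul, intervalIntegral.integral_zero, sub_zero, abs_zero]
        apply mul_nonneg (by positivity)
        apply add_nonneg <;> split <;> positivity
      · -- main case : 0 < cnt x < n
        set k := cnt x with hkdef
        have hk1 : 1 ≤ k := Nat.pos_of_ne_zero h0
        have hkn : k < n := lt_of_le_of_ne (cnt_le x) hnn
        set F := f (toSigns x) with hFdef
        have hFle : |F| ≤ 1 := hf x
        set g : ℝ → ℝ := fun p => p ^ (k-1) * (1-p) ^ (n-k) + p ^ k * (1-p) ^ (n-k-1) with hgdef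
        have hgcont : Continuous g := by rw [hgdef]; fun_prop
        have hgint : ∀ a b : ℝ, IntervalIntegrable g volume a b :=
          fun a b => hgcont.intervalIntegrable a b
        -- Beta evaluation
        have hbeta : ∫ p in (0:ℝ)..1, g p
            = ((k:ℝ)⁻¹ + ((n:ℝ)-(k:ℝ))⁻¹) / (n.choose k : ℝ) := by
          rw [hgdef]
          rw [intervalIntegral.integral_add
            ((by fun_prop : Continuous fun p : ℝ => p ^ (k-1) * (1-p) ^ (n-k)).intervalIntegrable 0 1)
            ((by fun_prop : Continuous fun p : ℝ => p ^ k * (1-p) ^ (n-k-1)).intervalIntegrable 0 1)]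
          rw [betaNat, betaNat]
          rw [show (k-1) + (n-k) + 1 = n by omega, show k + (n-k-1) + 1 = n by omega]
          exact beta_sum_eq n k hk1 hkn
        have hwt : shapWt x = ((k:ℝ)⁻¹ + ((n:ℝ)-(k:ℝ))⁻¹) / (LambdaN n * (n.choose k : ℝ)) := by
          rw [shapWt, if_neg, hcnt]
          rw [hcnt]
          push_neg
          exact ⟨h0, hnn⟩
        have hC : (0:ℝ) < (n.choose k : ℝ) := by
          exact_mod_cast Nat.choose_pos (le_of_lt hkn)
        have hwtF : shapWt x * F = (F / LambdaN n) * ∫ p in (0:ℝ)..1, g p := by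
          rw [hbeta, hwt]
          field_simp
        -- pointwise identity on the middle interval
        have hEq : Set.EqOn
            (fun p => ((1/p + 1/(1-p)) / LambdaN n) * (pwt p x * F))
            (fun p => (F / LambdaN n) * g p) (Set.uIcc δ (1-δ)) := by
          intro p hp
          rw [hIcc] at hp
          have hp0 : (0:ℝ) < p := lt_of_lt_of_le hδpos hp.1
          have hp1 : (0:ℝ) < 1 - p := by
            have := hp.2; linarith
          simp only
          rw [pwt_eq, ← hkdef, hgdef]
          have hid := pq_identity (k-1) (n-k-1) p (ne_of_gt hp0) (ne_of_gt hp1)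
          rw [show (k-1)+1 = k by omega, show (n-k-1)+1 = n-k by omega] at hid
          linear_combination (F / LambdaN n) * hid
        have hJ : (∫ p in δ..(1-δ), ((1/p + 1/(1-p)) / LambdaN n) * (pwt p x * F))
            = (F / LambdaN n) * ∫ p in δ..(1-δ), g p := by
          rw [intervalIntegral.integral_congr hEq, intervalIntegral.integral_const_mul]
        have hadd : (∫ p in (0:ℝ)..1, g p)
            = (∫ p in (0:ℝ)..δ, g p) + (∫ p in δ..(1-δ), g p) + (∫ p in (1-δ)..1, g p) := by
          rw [intervalIntegral.integral_add_adjacent_intervals (hgint 0 δ) (hgint δ (1-δ)),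
            intervalIntegral.integral_add_adjacent_intervals (hgint 0 (1-δ)) (hgint (1-δ) 1)]
        -- tail bounds
        have hT1nn : (0:ℝ) ≤ ∫ p in (0:ℝ)..δ, g p := by
          apply intervalIntegral.integral_nonneg (le_of_lt hδpos)
          intro u hu
          have hu0 : 0 ≤ u := hu.1
          have hu1 : u ≤ 1 := by have := hu.2; linarith
          simp only [hgdef]
          have : (0:ℝ) ≤ 1 - u := by linarith
          positivity
        have hT1 : (∫ p in (0:ℝ)..δ, g p) ≤ 2 * δ ^ k := by
          have hmono : (∫ p in (0:ℝ)..δ, g p) ≤ ∫ p in (0:ℝ)..δ, 2 * p ^ (k-1) := by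
            apply intervalIntegral.integral_mono_on (le_of_lt hδpos) (hgint 0 δ)
              ((by fun_prop : Continuous fun p : ℝ => 2 * p ^ (k-1)).intervalIntegrable 0 δ)
            intro u hu
            have hu0 : 0 ≤ u := hu.1
            have hu1 : u ≤ 1 := by have := hu.2; linarith
            have h1u0 : 0 ≤ 1 - u := by linarith
            have b1 : u ^ (k-1) * (1-u) ^ (n-k) ≤ u ^ (k-1) * 1 := by
              apply mul_le_mul_of_nonneg_left _ (by positivity)
              exact pow_le_one₀ h1u0 (by linarith)
            have b2 : u ^ k * (1-u) ^ (n-k-1) ≤ u ^ (k-1) * 1 := by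
              apply mul_le_mul (pow_le_pow_of_le_one hu0 hu1 (by omega))
                (pow_le_one₀ h1u0 (by linarith)) (by positivity) (by positivity)
            simp only [hgdef]
            nlinarith [b1, b2]
          have hcalc : (∫ p in (0:ℝ)..δ, 2 * p ^ (k-1)) = 2 * (δ ^ k) / k := by
            rw [intervalIntegral.integral_const_mul, integral_pow]
            rw [show (k-1) + 1 = k by omega]
            rw [zero_pow (by omega : k ≠ 0)]
            have : ((k - 1 : ℕ) : ℝ) + 1 = (k : ℝ) := by
              push_cast [Nat.cast_sub hk1]; ring
            rw [this]
            ring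
          have : 2 * (δ ^ k) / (k:ℝ) ≤ 2 * δ ^ k := by
            apply div_le_self (by positivity)
            exact_mod_cast hk1
          linarith
        have hT2sub : (∫ p in (1-δ)..1, g p) = ∫ u in (0:ℝ)..δ, g (1 - u) := by
          rw [intervalIntegral.integral_comp_sub_left g 1]
          norm_num
        have hT2nn : (0:ℝ) ≤ ∫ p in (1-δ)..1, g p := by
          rw [hT2sub]
          apply intervalIntegral.integral_nonneg (le_of_lt hδpos)
          intro u hu
          have hu0 : 0 ≤ u := hu.1
          have hu1 : u ≤ 1 := by have := hu.2; linarith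
          simp only [hgdef]
          have h1 : (0:ℝ) ≤ 1 - (1 - u) := by linarith
          have h2 : ((1:ℝ) - (1 - u)) = u := by ring
          rw [h2]
          have : (0:ℝ) ≤ 1 - u := by linarith
          positivity
        have hT2 : (∫ p in (1-δ)..1, g p) ≤ 2 * δ ^ (n-k) := by
          rw [hT2sub]
          have hmono : (∫ u in (0:ℝ)..δ, g (1 - u)) ≤ ∫ u in (0:ℝ)..δ, 2 * u ^ (n-k-1) := by
            have hgc2 : Continuous (fun u : ℝ => g (1 - u)) :=
              hgcont.comp (continuous_const.sub continuous_id)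
            apply intervalIntegral.integral_mono_on (le_of_lt hδpos)
              (hgc2.intervalIntegrable 0 δ)
              ((by fun_prop : Continuous fun u : ℝ => 2 * u ^ (n-k-1)).intervalIntegrable 0 δ)
            intro u hu
            have hu0 : 0 ≤ u := hu.1
            have hu1 : u ≤ 1 := by have := hu.2; linarith
            have h1u0 : 0 ≤ 1 - u := by linarith
            simp only [hgdef]
            have h2 : ((1:ℝ) - (1 - u)) = u := by ring
            rw [h2]
            have b1 : (1-u) ^ (k-1) * u ^ (n-k) ≤ 1 * u ^ (n-k-1) := by
              apply mul_le_mul (pow_le_one₀ h1u0 (by linarith))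
                (pow_le_pow_of_le_one hu0 hu1 (by omega)) (by positivity) (by norm_num)
            have b2 : (1-u) ^ k * u ^ (n-k-1) ≤ 1 * u ^ (n-k-1) := by
              apply mul_le_mul_of_nonneg_right _ (by positivity)
              exact pow_le_one₀ h1u0 (by linarith)
            nlinarith [b1, b2]
          have hcalc : (∫ u in (0:ℝ)..δ, 2 * u ^ (n-k-1)) = 2 * (δ ^ (n-k)) / (n-k : ℕ) := by
            rw [intervalIntegral.integral_const_mul, integral_pow]
            rw [show (n-k-1) + 1 = n-k by omega]
            rw [zero_pow (by omega : n-k ≠ 0)]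
            have : ((n - k - 1 : ℕ) : ℝ) + 1 = ((n - k : ℕ) : ℝ) := by
              have h1 : 1 ≤ n - k := by omega
              push_cast [Nat.cast_sub h1]; ring
            rw [this]
            ring
          have hle : 2 * (δ ^ (n-k)) / ((n-k:ℕ):ℝ) ≤ 2 * δ ^ (n-k) := by
            apply div_le_self (by positivity)
            exact_mod_cast (by omega : 1 ≤ n - k)
          linarith
        -- put it together
        have hfinal : shapWt x * F - (∫ p in δ..(1-δ),
              ((1/p + 1/(1-p)) / LambdaN n) * (pwt p x * F))
            = (F / LambdaN n) * ((∫ p in (0:ℝ)..δ, g p) + (∫ p in (1-δ)..1, g p)) := by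
          rw [hwtF, hJ, hadd]
          ring
        rw [hfinal, abs_mul]
        have habs1 : |F / LambdaN n| ≤ 1 / LambdaN n := by
          rw [abs_div, abs_of_pos hΛ]
          gcongr
        have habs2 : |(∫ p in (0:ℝ)..δ, g p) + (∫ p in (1-δ)..1, g p)|
            = (∫ p in (0:ℝ)..δ, g p) + (∫ p in (1-δ)..1, g p) :=
          abs_of_nonneg (add_nonneg hT1nn hT2nn)
        rw [habs2]
        calc |F / LambdaN n| * ((∫ p in (0:ℝ)..δ, g p) + (∫ p in (1-δ)..1, g p))
            ≤ (1 / LambdaN n) * (2 * δ ^ k + 2 * δ ^ (n-k)) := by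
              apply mul_le_mul habs1 (by linarith) (add_nonneg hT1nn hT2nn) (by positivity)
          _ = (2 / LambdaN n) *
              ((if cnt x = 0 then 0 else δ ^ cnt x) + (if cnt x = n then 0 else δ ^ (n - cnt x))) := by
              rw [if_neg h0, if_neg hnn, ← hkdef]
              ring
  -- step 3: sum up
  have hS1 : ∑ x : Fin n → Bool, (if cnt x = 0 then (0:ℝ) else δ ^ cnt x) = (δ+1)^n - 1 := by
    have hterm : ∀ x : Fin n → Bool, (if cnt x = 0 then (0:ℝ) else δ ^ cnt x)
        = δ ^ cnt x - (if x = (fun _ => false) then 1 else 0) := by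
      intro x
      by_cases h : cnt x = 0
      · rw [if_pos h, if_pos ((cnt_eq_zero_iff x).mp h), h]
        simp
      · rw [if_neg h, if_neg, sub_zero]
        intro hx
        exact h ((cnt_eq_zero_iff x).mpr hx)
    rw [Finset.sum_congr rfl (fun x _ => hterm x), Finset.sum_sub_distrib, sum_pow_cnt]
    congr 1
    rw [Finset.sum_ite_eq' Finset.univ (fun _ : Fin n => false) (fun _ => (1:ℝ))]
    simp
  have hS2 : ∑ x : Fin n → Bool, (if cnt x = n then (0:ℝ) else δ ^ (n - cnt x)) = (1+δ)^n - 1 := by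
    have hterm : ∀ x : Fin n → Bool, (if cnt x = n then (0:ℝ) else δ ^ (n - cnt x))
        = δ ^ (n - cnt x) - (if x = (fun _ => true) then 1 else 0) := by
      intro x
      by_cases h : cnt x = n
      · rw [if_pos h, if_pos ((cnt_eq_n_iff x).mp h), h]
        simp
      · rw [if_neg h, if_neg, sub_zero]
        intro hx
        exact h ((cnt_eq_n_iff x).mpr hx)
    rw [Finset.sum_congr rfl (fun x _ => hterm x), Finset.sum_sub_distrib, sum_pow_cocnt]
    congr 1
    rw [Finset.sum_ite_eq' Finset.univ (fun _ : Fin n => true) (fun _ => (1:ℝ))]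
    simp
  have hgeom : (1+δ)^n - 1 ≤ 3 * ((n:ℝ) * δ) := by
    have h1 := one_add_pow_sub_one_le δ (le_of_lt hδpos) n
    have h2 := one_add_pow_le_three (le_of_lt hδpos) hnδ
    nlinarith [mul_nonneg (mul_nonneg (Nat.cast_nonneg n) (le_of_lt hδpos)) (le_of_lt hδpos)]
  -- final assembly
  rw [hsplit, shapExp, ← Finset.sum_sub_distrib]
  calc |∑ x : Fin n → Bool, (shapWt x * f (toSigns x) - ∫ p in δ..(1-δ),
          ((1/p + 1/(1-p)) / LambdaN n) * (pwt p x * f (toSigns x)))|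
      ≤ ∑ x : Fin n → Bool, |shapWt x * f (toSigns x) - ∫ p in δ..(1-δ),
          ((1/p + 1/(1-p)) / LambdaN n) * (pwt p x * f (toSigns x))| :=
        Finset.abs_sum_le_sum_abs _ _
    _ ≤ ∑ x : Fin n → Bool, (2 / LambdaN n) *
          ((if cnt x = 0 then 0 else δ ^ cnt x) + (if cnt x = n then 0 else δ ^ (n - cnt x))) :=
        Finset.sum_le_sum (fun x _ => key x)
    _ = (2 / LambdaN n) * (((δ+1)^n - 1) + ((1+δ)^n - 1)) := by
        rw [← Finset.mul_sum, Finset.sum_add_distrib, hS1, hS2]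
    _ ≤ (2 / LambdaN n) * (3 * ((n:ℝ) * δ) + 3 * ((n:ℝ) * δ)) := by
        have h1 : (δ+1)^n - 1 ≤ 3 * ((n:ℝ) * δ) := by
          rw [add_comm δ 1]; exact hgeom
        gcongr
    _ = 12 * (n:ℝ) * δ / LambdaN n := by ring


end
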